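/- Let n ≥ 0 and let k be an integer with k ≥ n+2. Define h : ℝ → ℝ by h(ω) = Σ_{i=1}^{n+1} C(k−1, i−1) · (1−ω)^{i−1} · ω^{k−i}. Then for every ω ∈ ℝ, h has derivative at ω equal to (k−n−1) · C(k−1, n) · (1−ω)^{n} · ω^{k−n−2}, i.e., h'(ω) = (1/n!) · (1−ω)^n · (k−n−1) · (∏_{j=1}^{n}(k−j)) · ω^{k−n−2}. -/

import Mathlib

private lemma prod_eq_descFactorial (n k : ℕ) (hk : n + 1 ≤ k) :
    (∏ j ∈ Finset.Icc 1 n, ((k : ℝ) - (j : ℝ))) = ((k - 1).descFactorial n : ℝ) := by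
  induction n with
  | zero => simp
  | succ m ih =>
    rw [Finset.prod_Icc_succ_top (by omega : 1 ≤ m + 1), ih (by omega),
      Nat.descFactorial_succ]
    have h1 : ((k - 1 - m : ℕ) : ℝ) = (k : ℝ) - ((m : ℝ) + 1) := by
      have : (k - 1 - m : ℕ) = k - (m + 1) := by omega
      rw [this, Nat.cast_sub (by omega)]
      push_cast; ring
    rw [Nat.cast_mul, h1]
    push_cast
    ring

private lemma deriv_main (n k : ℕ) (hk : n + 2 ≤ k) (ω : ℝ) :
    HasDerivAt
      (fun w : ℝ => ∑ i ∈ Finset.Icc 1 (n + 1),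
        (Nat.choose (k - 1) (i - 1) : ℝ) * (1 - w) ^ (i - 1) * w ^ (k - i))
      (((k - n - 1 : ℕ) : ℝ) * (Nat.choose (k - 1) n : ℝ) * (1 - ω) ^ n * ω ^ (k - n - 2)) ω := by
  induction n with
  | zero =>
    have h := hasDerivAt_pow (k - 1) ω
    have e1 : k - 1 - 1 = k - 0 - 2 := by omega
    have e2 : ((k - 1 : ℕ) : ℝ) = ((k - 0 - 1 : ℕ) : ℝ) := by norm_num
    simp only [e1, e2] at h
    simpa using h
  | succ m ih =>
    have ihd := ih (by omega)
    -- derivative of the top term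
    have h1 : HasDerivAt (fun w : ℝ => 1 - w) (-1) ω := by
      simpa using (hasDerivAt_id ω).const_sub 1
    have h2 : HasDerivAt (fun w : ℝ => (1 - w) ^ (m + 1))
        (((m : ℝ) + 1) * (1 - ω) ^ m * (-1)) ω := by
      simpa using h1.fun_pow (m + 1)
    have h3 := hasDerivAt_pow (k - (m + 2)) ω
    have h4 := (h2.fun_mul h3).const_mul ((Nat.choose (k - 1) (m + 1) : ℝ))
    have h5 := ihd.fun_add h4
    have hfun : (fun w : ℝ => ∑ i ∈ Finset.Icc 1 (m + 1 + 1),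
        (Nat.choose (k - 1) (i - 1) : ℝ) * (1 - w) ^ (i - 1) * w ^ (k - i))
        = (fun w : ℝ => (∑ i ∈ Finset.Icc 1 (m + 1),
        (Nat.choose (k - 1) (i - 1) : ℝ) * (1 - w) ^ (i - 1) * w ^ (k - i))
        + (Nat.choose (k - 1) (m + 1) : ℝ)
          * ((1 - w) ^ (m + 1) * w ^ (k - (m + 2)))) := by
      funext w
      rw [Finset.sum_Icc_succ_top (by omega : 1 ≤ m + 1 + 1)]
      simp [mul_assoc]
    rw [← hfun] at h5
    refine h5.congr_deriv ?_
    symm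
    -- now a real-number identity
    have key : ((k - m - 1) * Nat.choose (k - 1) m : ℕ)
        = (m + 1) * Nat.choose (k - 1) (m + 1) := by
      have h := Nat.choose_succ_right_eq (k - 1) m
      have e : k - 1 - m = k - m - 1 := by omega
      rw [e] at h
      rw [Nat.mul_comm (m + 1), h, Nat.mul_comm]
    have keyR : ((k - m - 1 : ℕ) : ℝ) * (Nat.choose (k - 1) m : ℝ)
        = ((m : ℝ) + 1) * (Nat.choose (k - 1) (m + 1) : ℝ) := by
      have := congrArg (fun x : ℕ => (x : ℝ)) key
      push_cast at this
      linarith [this]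
    have e1 : k - (m + 1) - 1 = k - (m + 2) := by omega
    have e2 : k - (m + 1) - 2 = k - (m + 2) - 1 := by omega
    have e3 : k - m - 2 = k - (m + 2) := by omega
    rw [e1, e2, e3]
    have e4 : (1 - ω) ^ (m + 1) = (1 - ω) ^ m * (1 - ω) := by ring
    have e5 : ω ^ (k - (m + 2)) = ω ^ (k - (m + 2) - 1) * ω := by
      rw [← pow_succ]
      congr 1
      omega
    rw [e4, e5]
    linear_combination (-((1 - ω) ^ m * (ω ^ (k - (m + 2) - 1) * ω))) * keyR

theorem stmt10 (n k : ℕ) (hk : n + 2 ≤ k) (ω : ℝ) :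
    HasDerivAt
      (fun w : ℝ => ∑ i ∈ Finset.Icc 1 (n + 1),
        (Nat.choose (k - 1) (i - 1) : ℝ) * (1 - w) ^ (i - 1) * w ^ (k - i))
      (((k - n - 1 : ℕ) : ℝ) * (Nat.choose (k - 1) n : ℝ) * (1 - ω) ^ n * ω ^ (k - n - 2)) ω
    ∧ ((k - n - 1 : ℕ) : ℝ) * (Nat.choose (k - 1) n : ℝ) * (1 - ω) ^ n * ω ^ (k - n - 2)
      = (1 / (Nat.factorial n : ℝ)) * (1 - ω) ^ n * ((k - n - 1 : ℕ) : ℝ)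
        * (∏ j ∈ Finset.Icc 1 n, ((k : ℝ) - (j : ℝ))) * ω ^ (k - n - 2) := by
  refine ⟨deriv_main n k hk ω, ?_⟩
  rw [prod_eq_descFactorial n k (by omega), Nat.descFactorial_eq_factorial_mul_choose]
  have hf : (Nat.factorial n : ℝ) ≠ 0 := by positivity
  push_cast
  field_simp
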